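/- Suppose in a search game the payoffs are ordinally consistent and solitary-search dominant, social value outweighs cost (μ(ω)·v_s(ω) ≥ μ(π_i)·(c_i(K_i) − c_i(K_i−1)) for all ω, i, π_i), and there exists a redundancy-free strategy profile. Then the game admits a pure Nash equilibrium that maximizes the cost-inclusive social payoff U_CI(s) = ∑_ω μ(ω)·(v_s(ω)·1[m_s(ω)≥1] − ∑_i c_i(|s_i(π_i(ω))|)) over all pure profiles. -/

import Mathlib

open scoped Classical
noncomputable section

variable {N Ω : Type}

/-- `P` is a partition of the finite type `Ω` into nonempty, pairwise disjoint cells. -/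
def IsPartition [Fintype Ω] [DecidableEq Ω] (P : Finset (Finset Ω)) : Prop :=
  (∀ π ∈ P, π.Nonempty) ∧
  (∀ π ∈ P, ∀ π' ∈ P, π ≠ π' → Disjoint π π') ∧
  (∀ ω : Ω, ∃ π ∈ P, ω ∈ π)

/-- `f` is a valid strategy for player `i`: in every cell it searches a subset of
the cell of size at most the capacity `K i`. -/
def ValidFor [DecidableEq Ω] (Part : N → Finset (Finset Ω)) (K : N → ℕ) (i : N)
    (f : Finset Ω → Finset Ω) : Prop :=
  ∀ π ∈ Part i, f π ⊆ π ∧ (f π).card ≤ K i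

/-- A valid pure strategy profile. -/
def ValidStrat [DecidableEq Ω] (Part : N → Finset (Finset Ω)) (K : N → ℕ)
    (s : N → Finset Ω → Finset Ω) : Prop :=
  ∀ i, ValidFor Part K i (s i)

/-- Player `i` searches location `ω` under profile `s` (when the prize is at `ω`). -/
def searchesAt (Part : N → Finset (Finset Ω)) (s : N → Finset Ω → Finset Ω)
    (i : N) (ω : Ω) : Prop :=
  ∃ π ∈ Part i, ω ∈ π ∧ ω ∈ s i π

/-- Location `ω` is searched by some player under profile `s`. -/
def searched (Part : N → Finset (Finset Ω)) (s : N → Finset Ω → Finset Ω)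
    (ω : Ω) : Prop :=
  ∃ i, searchesAt Part s i ω

/-- The number of players searching `ω` under `s`. -/
def mcount [Fintype N] (Part : N → Finset (Finset Ω))
    (s : N → Finset Ω → Finset Ω) (ω : Ω) : ℕ :=
  (Finset.univ.filter fun i => searchesAt Part s i ω).card


noncomputable section

/-- Expected payoff of player `i` under profile `s`: for each location `ω`
(weighted by the prior `μ`), the reward `v i m ω` if `i` searches `ω` when `m`
players search there, minus the search cost `c i k` for searching `k` locations
in the realized cell. -/
def payoff {N Ω : Type} [Fintype N] [Fintype Ω] [DecidableEq Ω]
    (Part : N → Finset (Finset Ω)) (μ : Ω → ℝ) (c : N → ℕ → ℝ)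
    (v : N → ℕ → Ω → ℝ) (i : N) (s : N → Finset Ω → Finset Ω) : ℝ :=
  ∑ ω : Ω, μ ω *
    ((if searchesAt Part s i ω then v i (mcount Part s ω) ω else 0)
      - ∑ π ∈ (Part i).filter (fun π => ω ∈ π), c i ((s i π).card))

/-- A (pure Bayesian) Nash equilibrium: a valid profile from which no player
has a profitable unilateral deviation to another valid strategy. -/
def IsNash {N Ω : Type} [Fintype N] [DecidableEq N] [Fintype Ω] [DecidableEq Ω]
    (Part : N → Finset (Finset Ω)) (K : N → ℕ) (μ : Ω → ℝ) (c : N → ℕ → ℝ)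
    (v : N → ℕ → Ω → ℝ) (s : N → Finset Ω → Finset Ω) : Prop :=
  ValidStrat Part K s ∧
  ∀ (i : N) (t : Finset Ω → Finset Ω), ValidFor Part K i t →
    payoff Part μ c v i (Function.update s i t) ≤ payoff Part μ c v i s

end


noncomputable section

/-- Cost-inclusive expected social payoff: the social value when the prize is
found, minus the search costs of all players. -/
def costInclusiveSocialPayoff {N Ω : Type} [Fintype N] [Fintype Ω] [DecidableEq Ω]
    (Part : N → Finset (Finset Ω)) (μ : Ω → ℝ) (vs : Ω → ℝ) (c : N → ℕ → ℝ)
    (s : N → Finset Ω → Finset Ω) : ℝ :=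
  ∑ ω : Ω, μ ω *
    (vs ω * (if 1 ≤ mcount Part s ω then 1 else 0)
      - ∑ i, ∑ π ∈ (Part i).filter (fun π => ω ∈ π), c i ((s i π).card))

end

namespace SG
open Finset

variable {N Ω : Type}

lemma cell_unique [Fintype Ω] [DecidableEq Ω] {P : Finset (Finset Ω)} (hP : IsPartition P)
    {π π' : Finset Ω} (hπ : π ∈ P) (hπ' : π' ∈ P) {ω : Ω} (hω : ω ∈ π) (hω' : ω ∈ π') :
    π = π' := by
  by_contra h
  exact Finset.disjoint_left.mp (hP.2.1 π hπ π' hπ' h) hω hω'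

lemma sum_partition [Fintype Ω] [DecidableEq Ω] {P : Finset (Finset Ω)} (hP : IsPartition P)
    (f : Ω → ℝ) : ∑ ω : Ω, f ω = ∑ π ∈ P, ∑ ω ∈ π, f ω := by
  have huniv : (Finset.univ : Finset Ω) = P.biUnion (fun π => π) := by
    ext ω
    simp only [Finset.mem_univ, Finset.mem_biUnion, true_iff]
    exact hP.2.2 ω
  rw [huniv, Finset.sum_biUnion (fun π hπ π' hπ' hne => hP.2.1 π hπ π' hπ' hne)]

lemma cost_swap [Fintype Ω] [DecidableEq Ω] (P : Finset (Finset Ω)) (μ : Ω → ℝ)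
    (g : Finset Ω → ℝ) :
    ∑ ω : Ω, μ ω * ∑ π ∈ P.filter (fun π => ω ∈ π), g π
      = ∑ π ∈ P, (∑ ω ∈ π, μ ω) * g π := by
  have h1 : ∀ ω : Ω, μ ω * ∑ π ∈ P.filter (fun π => ω ∈ π), g π
      = ∑ π ∈ P, if ω ∈ π then μ ω * g π else 0 := by
    intro ω
    rw [Finset.mul_sum, Finset.sum_filter]
  simp only [h1]
  rw [Finset.sum_comm]
  refine Finset.sum_congr rfl fun π _ => ?_
  rw [Finset.sum_mul]
  rw [← Finset.sum_filter]
  refine Finset.sum_congr ?_ fun ω _ => rfl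
  ext ω; simp

lemma searchesAt_iff [Fintype Ω] [DecidableEq Ω] (Part : N → Finset (Finset Ω))
    (s : N → Finset Ω → Finset Ω) {i : N} (hP : IsPartition (Part i))
    {π : Finset Ω} (hπ : π ∈ Part i) {ω : Ω} (hω : ω ∈ π) :
    searchesAt Part s i ω ↔ ω ∈ s i π := by
  constructor
  · rintro ⟨π', hπ', hω', hmem⟩
    rwa [cell_unique hP hπ hπ' hω hω'] 
  · intro h; exact ⟨π, hπ, hω, h⟩

lemma mcount_pos_iff [Fintype N] [Fintype Ω] [DecidableEq Ω] (Part : N → Finset (Finset Ω))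
    (s : N → Finset Ω → Finset Ω) (ω : Ω) :
    1 ≤ mcount Part s ω ↔ searched Part s ω := by
  rw [mcount, Nat.one_le_iff_ne_zero, ← Nat.pos_iff_ne_zero, Finset.card_pos]
  constructor
  · rintro ⟨i, hi⟩; exact ⟨i, (Finset.mem_filter.mp hi).2⟩
  · rintro ⟨i, hi⟩; exact ⟨i, Finset.mem_filter.mpr ⟨Finset.mem_univ _, hi⟩⟩

lemma mcount_split [Fintype N] [Fintype Ω] [DecidableEq Ω] [DecidableEq N]
    (Part : N → Finset (Finset Ω)) (s : N → Finset Ω → Finset Ω) (ω : Ω) (i : N) :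
    mcount Part s ω = (Finset.univ.filter fun j => j ≠ i ∧ searchesAt Part s j ω).card
      + (if searchesAt Part s i ω then 1 else 0) := by
  rw [mcount]
  have : (Finset.univ.filter fun j => searchesAt Part s j ω)
      = (Finset.univ.filter fun j => j ≠ i ∧ searchesAt Part s j ω)
        ∪ (if searchesAt Part s i ω then {i} else ∅) := by
    ext j
    simp only [Finset.mem_filter, Finset.mem_union, Finset.mem_univ, true_and]
    by_cases hj : j = i
    · subst hj
      by_cases hs : searchesAt Part s j ω <;> simp [hs]
    · by_cases hs : searchesAt Part s i ω <;> simp [hs, hj]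
  rw [this, Finset.card_union_of_disjoint]
  · congr 1
    split <;> simp
  · split
    · simp only [Finset.disjoint_singleton_right, Finset.mem_filter]
      tauto
    · simp

lemma two_searchers [Fintype N] [Fintype Ω] [DecidableEq Ω] (Part : N → Finset (Finset Ω))
    (s : N → Finset Ω → Finset Ω) {ω : Ω} {i j : N} (hi : searchesAt Part s i ω)
    (hj : searchesAt Part s j ω) (hij : i ≠ j) : 2 ≤ mcount Part s ω := by
  rw [mcount]
  have : ({i, j} : Finset N) ⊆ Finset.univ.filter fun k => searchesAt Part s k ω := by
    intro k hk
    rcases Finset.mem_insert.mp hk with h | h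
    · subst h; simp [hi]
    · rw [Finset.mem_singleton.mp h]; simp [hj]
  calc 2 = ({i, j} : Finset N).card := by rw [Finset.card_insert_of_notMem (by simpa), Finset.card_singleton]
  _ ≤ _ := Finset.card_le_card this

lemma searchesAt_update_ne [Fintype Ω] [DecidableEq Ω] [DecidableEq N]
    (Part : N → Finset (Finset Ω)) (s : N → Finset Ω → Finset Ω)
    (i : N) (t : Finset Ω → Finset Ω) {j : N} (hj : j ≠ i) (ω : Ω) :
    searchesAt Part (Function.update s i t) j ω ↔ searchesAt Part s j ω := by
  simp [searchesAt, Function.update_of_ne hj]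

end SG
namespace SG
open Finset

variable {N Ω : Type}

noncomputable section

/-- Social value actually collected. -/
def Phi [Fintype N] [Fintype Ω] [DecidableEq Ω] (Part : N → Finset (Finset Ω))
    (μ : Ω → ℝ) (vs : Ω → ℝ) (s : N → Finset Ω → Finset Ω) : ℝ :=
  ∑ ω ∈ Finset.univ.filter (fun ω => 1 ≤ mcount Part s ω), μ ω * vs ω

/-- Total expected search cost. -/
def Cost [Fintype N] [Fintype Ω] [DecidableEq Ω] (Part : N → Finset (Finset Ω))
    (μ : Ω → ℝ) (c : N → ℕ → ℝ) (s : N → Finset Ω → Finset Ω) : ℝ :=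
  ∑ i, ∑ π ∈ Part i, (∑ x ∈ π, μ x) * c i ((s i π).card)

/-- Sum of solitary values over searched locations (a tie-breaking potential). -/
def Wpot [Fintype N] [Fintype Ω] [DecidableEq Ω] (Part : N → Finset (Finset Ω))
    (μ : Ω → ℝ) (v : N → ℕ → Ω → ℝ) (s : N → Finset Ω → Finset Ω) : ℝ :=
  ∑ i, ∑ π ∈ Part i, ∑ ω ∈ s i π, μ ω * v i 1 ω

end

/-- Redundancy-free full-capacity profile. -/
def GoodProfile [Fintype N] [Fintype Ω] [DecidableEq Ω] (Part : N → Finset (Finset Ω))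
    (K : N → ℕ) (s : N → Finset Ω → Finset Ω) : Prop :=
  ValidStrat Part K s ∧ (∀ i, ∀ π ∈ Part i, (s i π).card = K i) ∧
    ∀ ω : Ω, mcount Part s ω ≤ 1

lemma uci_eq [Fintype N] [Fintype Ω] [DecidableEq Ω] (Part : N → Finset (Finset Ω))
    (μ : Ω → ℝ) (vs : Ω → ℝ) (c : N → ℕ → ℝ) (s : N → Finset Ω → Finset Ω) :
    costInclusiveSocialPayoff Part μ vs c s = Phi Part μ vs s - Cost Part μ c s := by
  rw [costInclusiveSocialPayoff]
  have : ∀ ω : Ω, μ ω * (vs ω * (if 1 ≤ mcount Part s ω then 1 else 0)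
      - ∑ i, ∑ π ∈ (Part i).filter (fun π => ω ∈ π), c i ((s i π).card))
      = (if 1 ≤ mcount Part s ω then μ ω * vs ω else 0)
        - ∑ i, μ ω * ∑ π ∈ (Part i).filter (fun π => ω ∈ π), c i ((s i π).card) := by
    intro ω
    rw [mul_sub, ← Finset.mul_sum]
    congr 1
    split <;> ring
  simp only [this]
  rw [Finset.sum_sub_distrib]
  congr 1
  · rw [Phi, Finset.sum_filter]
  · rw [Cost, Finset.sum_comm]
    exact Finset.sum_congr rfl fun i _ => cost_swap (Part i) μ _

lemma payoff_eq [Fintype N] [Fintype Ω] [DecidableEq Ω] (Part : N → Finset (Finset Ω))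
    (K : N → ℕ) (μ : Ω → ℝ) (c : N → ℕ → ℝ) (v : N → ℕ → Ω → ℝ) (i : N)
    (s : N → Finset Ω → Finset Ω) (hP : IsPartition (Part i))
    (hval : ValidFor Part K i (s i)) :
    payoff Part μ c v i s = ∑ π ∈ Part i,
      ((∑ ω ∈ s i π, μ ω * v i (mcount Part s ω) ω)
        - (∑ x ∈ π, μ x) * c i ((s i π).card)) := by
  rw [payoff]
  have : ∀ ω : Ω, μ ω * ((if searchesAt Part s i ω then v i (mcount Part s ω) ω else 0)
      - ∑ π ∈ (Part i).filter (fun π => ω ∈ π), c i ((s i π).card))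
      = (if searchesAt Part s i ω then μ ω * v i (mcount Part s ω) ω else 0)
        - μ ω * ∑ π ∈ (Part i).filter (fun π => ω ∈ π), c i ((s i π).card) := by
    intro ω; rw [mul_sub]; congr 1; split <;> ring
  simp only [this]
  rw [Finset.sum_sub_distrib, cost_swap (Part i) μ, Finset.sum_sub_distrib]
  congr 1
  rw [sum_partition hP]
  refine Finset.sum_congr rfl fun π hπ => ?_
  have : ∀ ω ∈ π, (if searchesAt Part s i ω then μ ω * v i (mcount Part s ω) ω else 0)
      = (if ω ∈ s i π then μ ω * v i (mcount Part s ω) ω else 0) := by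
    intro ω hω
    rw [if_congr (searchesAt_iff Part s hP hπ hω) rfl rfl]
  rw [Finset.sum_congr rfl this, Finset.sum_ite_mem, Finset.inter_eq_right.mpr (hval π hπ).1]

lemma c_step (c : ℕ → ℝ) (hcx : ∀ k, c (k + 1) - c k ≤ c (k + 2) - c (k + 1)) :
    ∀ a b, a ≤ b → c (a + 1) - c a ≤ c (b + 1) - c b := by
  intro a b h
  induction b with
  | zero => rw [Nat.le_zero.mp h]
  | succ n ih =>
    rcases Nat.lt_or_ge a (n + 1) with h' | h'
    · exact (ih (Nat.lt_succ_iff.mp h')).trans (hcx n)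
    · rw [Nat.le_antisymm h h']

lemma c_chain (c : ℕ → ℝ) (hcx : ∀ k, c (k + 1) - c k ≤ c (k + 2) - c (k + 1)) :
    ∀ (K k : ℕ), k ≤ K → c K - c k ≤ ((K - k : ℕ) : ℝ) * (c K - c (K - 1)) := by
  have key : ∀ (n k : ℕ), c (k + n) - c k ≤ (n : ℝ) * (c (k + n) - c (k + n - 1)) := by
    intro n
    induction n with
    | zero => intro k; simp
    | succ m ih =>
      intro k
      cases m with
      | zero => simp
      | succ p =>
        have h1 := ih k
        have hstep := hcx (k + p)
        have e1 : k + (p + 1) = k + p + 1 := by omega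
        have e2 : k + p + 1 - 1 = k + p := by omega
        have e3 : k + (p + 1 + 1) = k + p + 2 := by omega
        have e4 : k + p + 2 - 1 = k + p + 1 := by omega
        rw [e3, e4]
        rw [e1, e2] at h1
        have h2 : ((p + 1 : ℕ) : ℝ) * (c (k + p + 1) - c (k + p))
            ≤ ((p + 1 : ℕ) : ℝ) * (c (k + p + 2) - c (k + p + 1)) :=
          mul_le_mul_of_nonneg_left hstep (by positivity)
        push_cast at h1 h2 ⊢
        linarith
  intro K k hk
  have := key (K - k) k
  have hkk : k + (K - k) = K := by omega
  rw [hkk] at this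
  exact this

lemma cKsub_nonneg (c : ℕ → ℝ) (hmono : ∀ k, c k ≤ c (k + 1)) (K : ℕ) :
    0 ≤ c K - c (K - 1) := by
  cases K with
  | zero => simp
  | succ n => simpa using sub_nonneg.mpr (hmono n)

/-- The key per-cell inequality. -/
lemma cell_ineq {Ω : Type} [DecidableEq Ω] (A B : Finset Ω) (f g : Ω → ℝ)
    (cK ck δ : ℝ) (K : ℕ) (hBcard : B.card = K) (hA : A.card ≤ K)
    (hfg : ∀ ω ∈ A, ω ∈ B → f ω = g ω)
    (hle : ∀ ω ∈ A, ω ∉ B → ∀ ω' ∈ B, f ω ≤ g ω')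
    (hδ : ∀ ω ∈ B, δ ≤ g ω) (hδ0 : 0 ≤ δ)
    (hcost : cK - ck ≤ ((K - A.card : ℕ) : ℝ) * δ) :
    ∑ ω ∈ A, f ω - ck ≤ ∑ ω ∈ B, g ω - cK := by
  have hsplitA : ∑ ω ∈ A, f ω = ∑ ω ∈ A ∩ B, f ω + ∑ ω ∈ A \ B, f ω :=
    (Finset.sum_inter_add_sum_sdiff A B f).symm
  have hsplitB : ∑ ω ∈ B, g ω = ∑ ω ∈ A ∩ B, g ω + ∑ ω ∈ B \ A, g ω := by
    rw [Finset.inter_comm]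
    exact (Finset.sum_inter_add_sum_sdiff B A g).symm
  have hAB : ∑ ω ∈ A ∩ B, f ω = ∑ ω ∈ A ∩ B, g ω :=
    Finset.sum_congr rfl fun ω hω =>
      hfg ω (Finset.mem_inter.mp hω).1 (Finset.mem_inter.mp hω).2
  have hBsplit : (B ∩ A).card + (B \ A).card = B.card := Finset.card_inter_add_card_sdiff B A
  have hAsplit : (A ∩ B).card + (A \ B).card = A.card := Finset.card_inter_add_card_sdiff A B
  have hIC : (A ∩ B).card = (B ∩ A).card := by rw [Finset.inter_comm]
  have hinterA : (A ∩ B).card ≤ A.card := Finset.card_le_card Finset.inter_subset_left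
  rcases Finset.eq_empty_or_nonempty (B \ A) with hBA | hBA
  · have hsub : B ⊆ A := by
      intro x hx
      by_contra hxA
      exact Finset.notMem_empty x (hBA ▸ Finset.mem_sdiff.mpr ⟨hx, hxA⟩)
    have hAeqB : A = B := (Finset.eq_of_subset_of_card_le hsub (hBcard ▸ hA)).symm
    have hAcard : A.card = K := by rw [hAeqB]; exact hBcard
    have h0 : K - A.card = 0 := by omega
    rw [h0] at hcost
    have hck : cK - ck ≤ 0 := by simpa using hcost
    have hsum : ∑ ω ∈ A, f ω = ∑ ω ∈ B, g ω := by
      rw [hAeqB]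
      exact Finset.sum_congr rfl fun ω hω => hfg ω (hAeqB.symm ▸ hω) hω
    linarith
  · obtain ⟨ω₀, hω₀, hmin⟩ := Finset.exists_min_image (B \ A) g hBA
    set m := g ω₀ with hm
    have hω₀B : ω₀ ∈ B := (Finset.mem_sdiff.mp hω₀).1
    have hmδ : δ ≤ m := hδ ω₀ hω₀B
    have hup : ∑ ω ∈ A \ B, f ω ≤ ((A \ B).card : ℝ) * m := by
      have := Finset.sum_le_card_nsmul (A \ B) f m ?_
      · simpa [nsmul_eq_mul] using this
      · intro ω hω
        exact hle ω (Finset.mem_sdiff.mp hω).1 (Finset.mem_sdiff.mp hω).2 ω₀ hω₀B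
    have hdown : ((B \ A).card : ℝ) * m ≤ ∑ ω ∈ B \ A, g ω := by
      have := Finset.card_nsmul_le_sum (B \ A) g m (fun ω hω => hmin ω hω)
      simpa [nsmul_eq_mul] using this
    have hm0 : 0 ≤ m := le_trans hδ0 hmδ
    have hcardsN : (B \ A).card = (K - A.card) + (A \ B).card := by omega
    have hcards : ((B \ A).card : ℝ) = ((K - A.card : ℕ) : ℝ) + ((A \ B).card : ℝ) := by
      rw [hcardsN]; push_cast; ring
    have hmain : cK - ck ≤ ((B \ A).card : ℝ) * m - ((A \ B).card : ℝ) * m := by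
      have h1 : cK - ck ≤ ((K - A.card : ℕ) : ℝ) * m :=
        le_trans hcost (mul_le_mul_of_nonneg_left hmδ (Nat.cast_nonneg _))
      have h2 : ((K - A.card : ℕ) : ℝ) * m = ((B \ A).card : ℝ) * m - ((A \ B).card : ℝ) * m := by
        rw [hcards]; ring
      linarith
    linarith [hsplitA, hsplitB, hAB, hup, hdown, hmain]
end SG
namespace SG
open Finset

variable {N Ω : Type}

/-- Search slots: one per player, cell, and capacity unit. -/
abbrev Slot (Part : N → Finset (Finset Ω)) (K : N → ℕ) : Type :=
  Σ i : N, {π : Finset Ω // π ∈ Part i} × Fin (K i)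

lemma card_slot [Fintype N] [Fintype Ω] [DecidableEq Ω]
    (Part : N → Finset (Finset Ω)) (K : N → ℕ) :
    Fintype.card (Slot Part K) = ∑ i, (Part i).card * K i := by
  simp [Slot]

lemma slot_mk_inj [Fintype Ω] [DecidableEq Ω] {Part : N → Finset (Finset Ω)} {K : N → ℕ}
    {i : N} {π π' : Finset Ω} {h : π ∈ Part i} {h' : π' ∈ Part i} {j j' : Fin (K i)}
    (e : (⟨i, ⟨⟨π, h⟩, j⟩⟩ : Slot Part K) = ⟨i, ⟨⟨π', h'⟩, j'⟩⟩) : π = π' ∧ j = j' := by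
  obtain ⟨-, h2⟩ := Sigma.mk.inj_iff.mp e
  obtain ⟨hp, hj⟩ := Prod.mk_inj.mp (eq_of_heq h2)
  exact ⟨congrArg Subtype.val hp, hj⟩

lemma search_cells_eq [Fintype N] [Fintype Ω] [DecidableEq Ω]
    (Part : N → Finset (Finset Ω)) (K : N → ℕ) (hPart : ∀ i, IsPartition (Part i))
    {s : N → Finset Ω → Finset Ω} (hs : ValidStrat Part K s)
    (hm : ∀ ω : Ω, mcount Part s ω ≤ 1)
    {i i' : N} {π π' : Finset Ω} (hπ : π ∈ Part i) (hπ' : π' ∈ Part i')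
    {ω : Ω} (h1 : ω ∈ s i π) (h2 : ω ∈ s i' π') : i = i' ∧ π = π' := by
  have hωπ : ω ∈ π := (hs i π hπ).1 h1
  have hωπ' : ω ∈ π' := (hs i' π' hπ').1 h2
  by_cases hii : i = i'
  · subst hii
    exact ⟨rfl, cell_unique (hPart i) hπ hπ' hωπ hωπ'⟩
  · exfalso
    have h2' := two_searchers Part s ⟨π, hπ, hωπ, h1⟩ ⟨π', hπ', hωπ', h2⟩ hii
    have := hm ω
    omega

lemma good_inj [Fintype N] [Fintype Ω] [DecidableEq Ω]
    (Part : N → Finset (Finset Ω)) (K : N → ℕ) (hPart : ∀ i, IsPartition (Part i))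
    {s : N → Finset Ω → Finset Ω} (hg : GoodProfile Part K s) :
    ∃ F : Slot Part K → Ω, Function.Injective F ∧
      ∀ l : Slot Part K, F l ∈ s l.1 l.2.1.1 := by
  have hcard : ∀ l : Slot Part K, K l.1 = (s l.1 l.2.1.1).card :=
    fun l => (hg.2.1 l.1 l.2.1.1 l.2.1.2).symm
  refine ⟨fun l => ((s l.1 l.2.1.1).equivFin.symm (finCongr (hcard l) l.2.2) : Ω), ?_, ?_⟩
  · rintro ⟨i, ⟨π, hπ⟩, j⟩ ⟨i', ⟨π', hπ'⟩, j'⟩ h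
    have m1 : (((s i π).equivFin.symm (finCongr (hcard ⟨i, ⟨π, hπ⟩, j⟩) j)) : Ω) ∈ s i π :=
      Finset.coe_mem _
    have m2 : (((s i' π').equivFin.symm (finCongr (hcard ⟨i', ⟨π', hπ'⟩, j'⟩) j')) : Ω) ∈ s i' π' :=
      Finset.coe_mem _
    have h' : (((s i π).equivFin.symm (finCongr (hcard ⟨i, ⟨π, hπ⟩, j⟩) j)) : Ω)
        = (((s i' π').equivFin.symm (finCongr (hcard ⟨i', ⟨π', hπ'⟩, j'⟩) j')) : Ω) := h
    rw [← h'] at m2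
    obtain ⟨hii, hππ⟩ := search_cells_eq Part K hPart hg.1 hg.2.2 hπ hπ' m1 m2
    subst hii; subst hππ
    have hsub : ((s i π).equivFin.symm (finCongr (hcard ⟨i, ⟨π, hπ⟩, j⟩) j))
        = (s i π).equivFin.symm (finCongr (hcard ⟨i, ⟨π, hπ'⟩, j'⟩) j') :=
      Subtype.coe_injective h'
    have hfin := (s i π).equivFin.symm.injective hsub
    have hj : j = j' := by
      have := congrArg Fin.val hfin
      exact Fin.ext (by simpa using this)
    subst hj
    rfl
  · intro l; exact Finset.coe_mem _

lemma card_searched_le [Fintype N] [Fintype Ω] [DecidableEq Ω]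
    (Part : N → Finset (Finset Ω)) (s : N → Finset Ω → Finset Ω) :
    (Finset.univ.filter (fun ω => searched Part s ω)).card
      ≤ ∑ i, ∑ π ∈ Part i, (s i π).card := by
  have hsub : Finset.univ.filter (fun ω => searched Part s ω)
      ⊆ Finset.univ.biUnion (fun i => (Part i).biUnion (fun π => s i π)) := by
    intro ω hω
    obtain ⟨i, π, hπ, hωπ, hm⟩ := (Finset.mem_filter.mp hω).2
    exact Finset.mem_biUnion.mpr ⟨i, Finset.mem_univ i,
      Finset.mem_biUnion.mpr ⟨π, hπ, hm⟩⟩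
  calc (Finset.univ.filter (fun ω => searched Part s ω)).card
      ≤ (Finset.univ.biUnion (fun i => (Part i).biUnion (fun π => s i π))).card :=
        Finset.card_le_card hsub
    _ ≤ ∑ i, ((Part i).biUnion (fun π => s i π)).card := Finset.card_biUnion_le
    _ ≤ ∑ i, ∑ π ∈ Part i, (s i π).card :=
        Finset.sum_le_sum fun i _ => Finset.card_biUnion_le

lemma inj_helper [Fintype N] [Fintype Ω] [DecidableEq Ω]
    (Part : N → Finset (Finset Ω)) (K : N → ℕ) {s' : N → Finset Ω → Finset Ω}
    (hs' : ValidStrat Part K s')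
    {i₁ i₂ : N} {π₁ π₂ : Finset Ω} (hπ₁ : π₁ ∈ Part i₁) (hπ₂ : π₂ ∈ Part i₂)
    {ω₁ ω₂ : Ω} (hm₁ : ω₁ ∈ s' i₁ π₁) (hm₂ : ω₂ ∈ s' i₂ π₂)
    (heq : (⟨i₁, ⟨⟨π₁, hπ₁⟩, Fin.castLE (hs' i₁ π₁ hπ₁).2 ((s' i₁ π₁).equivFin ⟨ω₁, hm₁⟩)⟩⟩ : Slot Part K)
         = ⟨i₂, ⟨⟨π₂, hπ₂⟩, Fin.castLE (hs' i₂ π₂ hπ₂).2 ((s' i₂ π₂).equivFin ⟨ω₂, hm₂⟩)⟩⟩) :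
    ω₁ = ω₂ := by
  obtain ⟨hi, h2⟩ := Sigma.mk.inj_iff.mp heq
  subst hi
  obtain ⟨hp, hidx⟩ := Prod.mk_inj.mp (eq_of_heq h2)
  have hππ : π₁ = π₂ := congrArg Subtype.val hp
  subst hππ
  have hfin : ((s' i₁ π₁).equivFin ⟨ω₁, hm₁⟩ : Fin _) = (s' i₁ π₁).equivFin ⟨ω₂, hm₂⟩ := by
    have := congrArg Fin.val hidx
    exact Fin.ext (by simpa using this)
  have := (s' i₁ π₁).equivFin.injective hfin
  exact congrArg Subtype.val this

end SG
namespace SG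
open Finset

variable {N Ω : Type}

lemma exists_good_cover [Fintype N] [DecidableEq N] [Fintype Ω] [DecidableEq Ω]
    (Part : N → Finset (Finset Ω)) (K : N → ℕ) (hPart : ∀ i, IsPartition (Part i))
    (s₀ : N → Finset Ω → Finset Ω) (h₀ : GoodProfile Part K s₀)
    (s' : N → Finset Ω → Finset Ω) (hs' : ValidStrat Part K s') :
    ∃ s : N → Finset Ω → Finset Ω, GoodProfile Part K s ∧
      (∀ ω : Ω, searched Part s' ω → searched Part s ω) ∧
      (Finset.univ.filter (fun ω => searched Part s ω)).card
        = Fintype.card (Slot Part K) := by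
  classical
  obtain ⟨F₀, hF₀inj, hF₀mem⟩ := good_inj Part K hPart h₀
  have hF₀cell : ∀ l : Slot Part K, F₀ l ∈ l.2.1.1 :=
    fun l => (h₀.1 l.1 l.2.1.1 l.2.1.2).1 (hF₀mem l)
  have hcardle : Fintype.card (Slot Part K) ≤ Fintype.card Ω :=
    Fintype.card_le_of_injective F₀ hF₀inj
  set d := Fintype.card Ω - Fintype.card (Slot Part K) with hd
  set I : Finset Ω := Finset.univ.filter (fun ω => searched Part s' ω) with hI
  set t : Slot Part K ⊕ Fin d → Finset Ω :=
    Sum.elim (fun l => l.2.1.1) (fun _ => Finset.univ \ I) with ht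
  have hall : ∀ A : Finset (Slot Part K ⊕ Fin d), A.card ≤ (A.biUnion t).card := by
    intro A
    set AL := A.toLeft with hAL
    set AD := A.toRight with hADdef
    have hcardA : AL.card + AD.card = A.card := Finset.card_toLeft_add_card_toRight
    set B := A.biUnion t with hB
    have hsubL : ∀ l ∈ AL, (l : Slot Part K).2.1.1 ⊆ B := by
      intro l hl x hx
      exact Finset.mem_biUnion.mpr ⟨Sum.inl l, Finset.mem_toLeft.mp hl, hx⟩
    have hALB : AL.card ≤ B.card := by
      apply Finset.card_le_card_of_injOn F₀
      · intro l hl; exact hsubL l hl (hF₀cell l)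
      · exact hF₀inj.injOn
    rcases Finset.eq_empty_or_nonempty AD with hAD | ⟨r, hr⟩
    · rw [← hcardA, hAD, Finset.card_empty]
      simpa using hALB
    · have hcomplB : Finset.univ \ I ⊆ B := by
        intro x hx
        exact Finset.mem_biUnion.mpr ⟨Sum.inr r, Finset.mem_toRight.mp hr, hx⟩
      have hIB : (I \ B).card + AL.card ≤ Fintype.card (Slot Part K) := by
        have hsx : ∀ x : {x : Ω // x ∈ I \ B}, searched Part s' (x : Ω) :=
          fun x => (Finset.mem_filter.mp (Finset.mem_sdiff.mp x.2).1).2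
        let g : {x : Ω // x ∈ I \ B} → Slot Part K := fun x =>
          ⟨(hsx x).choose, ⟨⟨(hsx x).choose_spec.choose, (hsx x).choose_spec.choose_spec.1⟩,
            Fin.castLE (hs' (hsx x).choose (hsx x).choose_spec.choose
                (hsx x).choose_spec.choose_spec.1).2
              ((s' (hsx x).choose (hsx x).choose_spec.choose).equivFin
                ⟨(x : Ω), (hsx x).choose_spec.choose_spec.2.2⟩)⟩⟩
        have hgmem : ∀ x, (x : Ω) ∈ s' (g x).1 (g x).2.1.1 :=
          fun x => (hsx x).choose_spec.choose_spec.2.2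
        have hgcell : ∀ x, (x : Ω) ∈ (g x).2.1.1 :=
          fun x => (hsx x).choose_spec.choose_spec.2.1
        have hgAL : ∀ x, g x ∉ AL := by
          intro x hgx
          have : (x : Ω) ∈ B := hsubL (g x) hgx (hgcell x)
          exact (Finset.mem_sdiff.mp x.2).2 this
        let g' : {x : Ω // x ∈ I \ B} → {l : Slot Part K // l ∈ Finset.univ \ AL} :=
          fun x => ⟨g x, Finset.mem_sdiff.mpr ⟨Finset.mem_univ _, hgAL x⟩⟩
        have hg'inj : Function.Injective g' := by
          intro x y hxy
          have hgg : g x = g y := congrArg Subtype.val hxy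
          apply Subtype.ext
          exact inj_helper Part K hs' (hsx x).choose_spec.choose_spec.1
            (hsx y).choose_spec.choose_spec.1
            (hsx x).choose_spec.choose_spec.2.2 (hsx y).choose_spec.choose_spec.2.2 hgg
        have hcard2 : (I \ B).card ≤ (Finset.univ \ AL).card := by
          have h1 := Fintype.card_le_of_injective g' hg'inj
          rwa [Fintype.card_coe, Fintype.card_coe] at h1
        have hcard3 : (Finset.univ \ AL).card + AL.card = Fintype.card (Slot Part K) := by
          rw [Finset.card_sdiff_of_subset (Finset.subset_univ AL), Finset.card_univ]
          have : AL.card ≤ Fintype.card (Slot Part K) := by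
            rw [← Finset.card_univ]; exact Finset.card_le_card (Finset.subset_univ AL)
          omega
        omega
      have hBsplit : (B ∩ I).card + (B \ I).card = B.card :=
        Finset.card_inter_add_card_sdiff B I
      have hIsplit : (I ∩ B).card + (I \ B).card = I.card :=
        Finset.card_inter_add_card_sdiff I B
      have hinterc : (I ∩ B).card = (B ∩ I).card := by rw [Finset.inter_comm]
      have hcompl : (Finset.univ \ I).card ≤ (B \ I).card := by
        apply Finset.card_le_card
        intro x hx
        exact Finset.mem_sdiff.mpr ⟨hcomplB hx, (Finset.mem_sdiff.mp hx).2⟩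
      have hIu : (Finset.univ \ I).card + I.card = Fintype.card Ω := by
        rw [Finset.card_sdiff_of_subset (Finset.subset_univ I), Finset.card_univ]
        have : I.card ≤ Fintype.card Ω := by
          rw [← Finset.card_univ]; exact Finset.card_le_card (Finset.subset_univ I)
        omega
      have hADle : AD.card ≤ d := by
        have := Finset.card_le_univ AD
        simpa using this
      omega
  obtain ⟨f, hfinj, hfmem⟩ := (Finset.all_card_le_biUnion_card_iff_exists_injective t).mp hall
  have hcardeq : Fintype.card (Slot Part K ⊕ Fin d) = Fintype.card Ω := by
    rw [Fintype.card_sum, Fintype.card_fin]; omega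
  have hfbij : Function.Bijective f :=
    (Fintype.bijective_iff_injective_and_card f).mpr ⟨hfinj, hcardeq⟩
  have hcell : ∀ l : Slot Part K, f (Sum.inl l) ∈ l.2.1.1 := fun l => hfmem (Sum.inl l)
  set s : N → Finset Ω → Finset Ω := fun i π =>
    if h : π ∈ Part i then
      Finset.univ.image (fun j : Fin (K i) => f (Sum.inl ⟨i, ⟨π, h⟩, j⟩)) else ∅ with hsdef
  have hmem_iff : ∀ (i : N) (π : Finset Ω) (h : π ∈ Part i) (ω : Ω),
      ω ∈ s i π ↔ ∃ j : Fin (K i), f (Sum.inl ⟨i, ⟨π, h⟩, j⟩) = ω := by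
    intro i π hπ ω
    rw [hsdef]
    simp only [dif_pos hπ, Finset.mem_image, Finset.mem_univ, true_and]
  have hjinj : ∀ (i : N) (π : Finset Ω) (h : π ∈ Part i),
      Function.Injective (fun j : Fin (K i) => f (Sum.inl ⟨i, ⟨π, h⟩, j⟩)) := by
    intro i π h j j' e
    exact (slot_mk_inj (Sum.inl_injective (hfinj e))).2
  have hvalid : ValidStrat Part K s := by
    intro i π hπ
    constructor
    · intro ω hω
      obtain ⟨j, hj⟩ := (hmem_iff i π hπ ω).mp hω
      rw [← hj]
      exact hcell ⟨i, ⟨π, hπ⟩, j⟩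
    · rw [hsdef]
      simp only [dif_pos hπ]
      exact le_trans Finset.card_image_le (by simp)
  have hfull : ∀ i, ∀ π ∈ Part i, (s i π).card = K i := by
    intro i π hπ
    rw [hsdef]
    simp only [dif_pos hπ]
    rw [Finset.card_image_of_injective _ (hjinj i π hπ)]
    simp
  have hm1 : ∀ ω : Ω, mcount Part s ω ≤ 1 := by
    intro ω
    rw [mcount]
    apply Finset.card_le_one.mpr
    intro a ha b hb
    obtain ⟨πa, hπa, hωa, hma⟩ := (Finset.mem_filter.mp ha).2
    obtain ⟨πb, hπb, hωb, hmb⟩ := (Finset.mem_filter.mp hb).2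
    obtain ⟨ja, hja⟩ := (hmem_iff a πa hπa ω).mp hma
    obtain ⟨jb, hjb⟩ := (hmem_iff b πb hπb ω).mp hmb
    have : Sum.inl (⟨a, ⟨πa, hπa⟩, ja⟩ : Slot Part K) = Sum.inl ⟨b, ⟨πb, hπb⟩, jb⟩ :=
      hfinj (by rw [hja, hjb])
    exact congrArg Sigma.fst (Sum.inl_injective this)
  have himage : Finset.univ.filter (fun ω => searched Part s ω)
      = Finset.univ.image (fun l : Slot Part K => f (Sum.inl l)) := by
    ext ω
    simp only [Finset.mem_filter, Finset.mem_univ, true_and, Finset.mem_image]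
    constructor
    · rintro ⟨i, π, hπ, hωπ, hm⟩
      obtain ⟨j, hj⟩ := (hmem_iff i π hπ ω).mp hm
      exact ⟨⟨i, ⟨π, hπ⟩, j⟩, hj⟩
    · rintro ⟨l, rfl⟩
      exact ⟨l.1, l.2.1.1, l.2.1.2, hcell l,
        (hmem_iff l.1 l.2.1.1 l.2.1.2 _).mpr ⟨l.2.2, rfl⟩⟩
  refine ⟨s, ⟨hvalid, hfull, hm1⟩, ?_, ?_⟩
  · intro ω hω
    obtain ⟨x, hx⟩ := hfbij.2 ω
    cases x with
    | inr r =>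
      exfalso
      have : f (Sum.inr r) ∈ Finset.univ \ I := hfmem (Sum.inr r)
      rw [hx] at this
      exact (Finset.mem_sdiff.mp this).2 (Finset.mem_filter.mpr ⟨Finset.mem_univ _, hω⟩)
    | inl l =>
      exact ⟨l.1, l.2.1.1, l.2.1.2, by rw [← hx]; exact hcell l,
        (hmem_iff l.1 l.2.1.1 l.2.1.2 _).mpr ⟨l.2.2, hx⟩⟩
  · rw [himage]
    exact (Finset.card_image_of_injective Finset.univ
      (fun a b h => Sum.inl_injective (hfinj h))).trans Finset.card_univ

end SG
namespace SG
open Finset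

variable {N Ω : Type}

lemma searchesAt_update_cell [Fintype Ω] [DecidableEq Ω] [DecidableEq N]
    (Part : N → Finset (Finset Ω)) {i : N} (hP : IsPartition (Part i))
    (S : N → Finset Ω → Finset Ω) {π : Finset Ω} (hπ : π ∈ Part i) (A : Finset Ω) (ω : Ω) :
    searchesAt Part (Function.update S i (Function.update (S i) π A)) i ω
      ↔ ((ω ∈ π ∧ ω ∈ A) ∨ (ω ∉ π ∧ searchesAt Part S i ω)) := by
  constructor
  · rintro ⟨π', hπ', hωπ', hmem⟩
    rw [Function.update_self] at hmem
    by_cases hq : π' = π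
    · subst hq
      rw [Function.update_self] at hmem
      exact Or.inl ⟨hωπ', hmem⟩
    · rw [Function.update_of_ne hq] at hmem
      refine Or.inr ⟨?_, π', hπ', hωπ', hmem⟩
      intro hωπ
      exact hq (cell_unique hP hπ' hπ hωπ' hωπ)
  · rintro (⟨hωπ, hA⟩ | ⟨hnot, π', hπ', hωπ', hmem⟩)
    · refine ⟨π, hπ, hωπ, ?_⟩
      rw [Function.update_self, Function.update_self]
      exact hA
    · refine ⟨π', hπ', hωπ', ?_⟩
      rw [Function.update_self, Function.update_of_ne (show π' ≠ π from fun h => hnot (by rw [← h]; exact hωπ'))]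
      exact hmem

end SG
/-- If payoffs are ordinally consistent and solitary-search dominant, social
value outweighs cost, and there exists a redundancy-free strategy profile, then
the game admits a pure Nash equilibrium maximizing the cost-inclusive social
payoff over all valid pure profiles. -/
theorem exists_cost_inclusive_socially_optimal_equilibrium
    {N Ω : Type} [Fintype N] [DecidableEq N] [Fintype Ω] [DecidableEq Ω]
    (Part : N → Finset (Finset Ω)) (K : N → ℕ) (μ : Ω → ℝ)
    (c : N → ℕ → ℝ) (v : N → ℕ → Ω → ℝ) (vs : Ω → ℝ)
    (hPart : ∀ i, IsPartition (Part i))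
    (hμ_nonneg : ∀ ω, 0 ≤ μ ω) (hμ_sum : ∑ ω, μ ω = 1)
    (hμ_cell : ∀ i, ∀ π ∈ Part i, 0 < ∑ ω ∈ π, μ ω)
    (hc0 : ∀ i, c i 0 = 0)
    (hc_mono : ∀ i k, c i k ≤ c i (k + 1))
    (hc_convex : ∀ i k, c i (k + 1) - c i k ≤ c i (k + 2) - c i (k + 1))
    (hv_nonneg : ∀ i m ω, 0 ≤ v i m ω)
    (hv_dec : ∀ i m ω, v i (m + 1) ω ≤ v i m ω)
    (hvs_nonneg : ∀ ω, 0 ≤ vs ω)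
    -- ordinal consistency
    (hOC : ∀ i, ∀ π ∈ Part i, ∀ ω ∈ π, ∀ ω' ∈ π,
      μ ω * v i 1 ω < μ ω' * v i 1 ω' → μ ω * vs ω ≤ μ ω' * vs ω')
    -- solitary-search dominance
    (hSSD1 : ∀ i, ∀ π ∈ Part i, ∀ ω ∈ π, ∀ ω' ∈ π,
      (μ ω' / ∑ x ∈ π, μ x) * v i 2 ω' ≤ (μ ω / ∑ x ∈ π, μ x) * v i 1 ω)
    (hSSD2 : ∀ i, ∀ π ∈ Part i, ∀ ω ∈ π,
      c i (K i) - c i (K i - 1) ≤ (μ ω / ∑ x ∈ π, μ x) * v i 1 ω)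
    -- social value outweighs cost
    (hVC : ∀ (ω : Ω) (i : N), ∀ π ∈ Part i,
      (∑ x ∈ π, μ x) * (c i (K i) - c i (K i - 1)) ≤ μ ω * vs ω)
    -- existence of a redundancy-free profile
    (hRF : ∃ s₀ : N → Finset Ω → Finset Ω, ValidStrat Part K s₀ ∧
      (∀ i, ∀ π ∈ Part i, (s₀ i π).card = K i) ∧
      (∀ ω : Ω, mcount Part s₀ ω ≤ 1)) :
    ∃ s : N → Finset Ω → Finset Ω, IsNash Part K μ c v s ∧
      ∀ s' : N → Finset Ω → Finset Ω, ValidStrat Part K s' →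
        costInclusiveSocialPayoff Part μ vs c s' ≤
        costInclusiveSocialPayoff Part μ vs c s := by
  classical
  obtain ⟨s₀, hs₀v, hs₀full, hs₀m⟩ := hRF
  have hGood₀ : SG.GoodProfile Part K s₀ := ⟨hs₀v, hs₀full, hs₀m⟩
  -- monotonicity of v
  have hv_anti : ∀ (i : N) (ω : Ω) (a b : ℕ), a ≤ b → v i b ω ≤ v i a ω := by
    intro i ω a b h
    induction b with
    | zero => rw [Nat.le_zero.mp h]
    | succ n ih =>
      rcases Nat.lt_or_ge a (n + 1) with h' | h'
      · exact le_trans (hv_dec i n ω) (ih (Nat.lt_succ_iff.mp h'))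
      · rw [Nat.le_antisymm h h']
  -- absolute versions of SSD
  have hSSD1' : ∀ i, ∀ π ∈ Part i, ∀ ω ∈ π, ∀ ω' ∈ π,
      μ ω * v i 2 ω ≤ μ ω' * v i 1 ω' := by
    intro i π hπ ω hω ω' hω'
    have hT := hμ_cell i π hπ
    have h := hSSD1 i π hπ ω' hω' ω hω
    have hT0 : (∑ x ∈ π, μ x) ≠ 0 := ne_of_gt hT
    have h2 := mul_le_mul_of_nonneg_right h hT.le
    have e1 : (μ ω / ∑ x ∈ π, μ x) * v i 2 ω * (∑ x ∈ π, μ x) = μ ω * v i 2 ω := by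
      field_simp
    have e2 : (μ ω' / ∑ x ∈ π, μ x) * v i 1 ω' * (∑ x ∈ π, μ x) = μ ω' * v i 1 ω' := by
      field_simp
    rw [e1, e2] at h2
    exact h2
  have hSSD2' : ∀ i, ∀ π ∈ Part i, ∀ ω ∈ π,
      (∑ x ∈ π, μ x) * (c i (K i) - c i (K i - 1)) ≤ μ ω * v i 1 ω := by
    intro i π hπ ω hω
    have hT := hμ_cell i π hπ
    have h := hSSD2 i π hπ ω hω
    have hT0 : (∑ x ∈ π, μ x) ≠ 0 := ne_of_gt hT
    have h2 := mul_le_mul_of_nonneg_right h hT.le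
    have e2 : (μ ω / ∑ x ∈ π, μ x) * v i 1 ω * (∑ x ∈ π, μ x) = μ ω * v i 1 ω := by
      field_simp
    rw [e2] at h2
    linarith [h2]
  -- select the lexicographically optimal good profile
  set G : Finset (N → Finset Ω → Finset Ω) :=
    Finset.univ.filter (fun s => SG.GoodProfile Part K s) with hGdef
  have hG₀ : s₀ ∈ G := Finset.mem_filter.mpr ⟨Finset.mem_univ _, hGood₀⟩
  obtain ⟨S₁, hS₁G, hS₁max⟩ :=
    G.exists_max_image (fun s => SG.Phi Part μ vs s) ⟨s₀, hG₀⟩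
  obtain ⟨S, hSG2, hSmaxW⟩ :=
    (G.filter (fun s => SG.Phi Part μ vs s = SG.Phi Part μ vs S₁)).exists_max_image
      (fun s => SG.Wpot Part μ v s) ⟨S₁, Finset.mem_filter.mpr ⟨hS₁G, rfl⟩⟩
  have hSG : S ∈ G := (Finset.mem_filter.mp hSG2).1
  have hSPhi : SG.Phi Part μ vs S = SG.Phi Part μ vs S₁ := (Finset.mem_filter.mp hSG2).2
  have hSgood : SG.GoodProfile Part K S := (Finset.mem_filter.mp hSG).2
  have hPhimax : ∀ s, SG.GoodProfile Part K s →
      SG.Phi Part μ vs s ≤ SG.Phi Part μ vs S := by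
    intro s hs
    rw [hSPhi]
    exact hS₁max s (Finset.mem_filter.mpr ⟨Finset.mem_univ _, hs⟩)
  have hWmax : ∀ s, SG.GoodProfile Part K s →
      SG.Phi Part μ vs S ≤ SG.Phi Part μ vs s → SG.Wpot Part μ v s ≤ SG.Wpot Part μ v S := by
    intro s hs hle
    refine hSmaxW s (Finset.mem_filter.mpr ⟨Finset.mem_filter.mpr ⟨Finset.mem_univ _, hs⟩, ?_⟩)
    rw [← hSPhi]
    exact le_antisymm (hPhimax s hs) hle
  -- every searched location under S has multiplicity exactly one
  have hm1S : ∀ (i : N) (π : Finset Ω), π ∈ Part i → ∀ ω ∈ S i π,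
      mcount Part S ω = 1 := by
    intro i π hπ ω hω
    have h1 : 1 ≤ mcount Part S ω := (SG.mcount_pos_iff Part S ω).mpr
      ⟨i, π, hπ, (hSgood.1 i π hπ).1 hω, hω⟩
    have h2 := hSgood.2.2 ω
    omega
  -- the greedy property P3
  have hP3 : ∀ (i : N) (π : Finset Ω), π ∈ Part i → ∀ ω₀ ∈ S i π, ∀ ω' ∈ π,
      mcount Part S ω' = 0 → μ ω' * v i 1 ω' ≤ μ ω₀ * v i 1 ω₀ := by
    intro i π hπ ω₀ hω₀ ω' hω' hm0
    by_contra hcon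
    push_neg at hcon
    have hlt : μ ω₀ * v i 1 ω₀ < μ ω' * v i 1 ω' := hcon
    have hω₀π : ω₀ ∈ π := (hSgood.1 i π hπ).1 hω₀
    have hω'nS : ω' ∉ S i π := by
      intro h
      rw [hm1S i π hπ ω' h] at hm0
      omega
    have hne : ω' ≠ ω₀ := fun h => hω'nS (h ▸ hω₀)
    have hnosearch : ∀ j, ¬ searchesAt Part S j ω' := by
      intro j hj
      have := (SG.mcount_pos_iff Part S ω').mpr ⟨j, hj⟩
      omega
    set newset : Finset Ω := insert ω' ((S i π).erase ω₀) with hnsdef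
    set S' : N → Finset Ω → Finset Ω :=
      Function.update S i (Function.update (S i) π newset) with hS'def
    have hKpos : 1 ≤ K i := by
      have := hSgood.2.1 i π hπ
      have h2 : 0 < (S i π).card := Finset.card_pos.mpr ⟨ω₀, hω₀⟩
      omega
    have hω'er : ω' ∉ (S i π).erase ω₀ := fun h => hω'nS (Finset.mem_erase.mp h).2
    have hnscard : newset.card = K i := by
      rw [hnsdef, Finset.card_insert_of_notMem hω'er,
        Finset.card_erase_of_mem hω₀, hSgood.2.1 i π hπ]
      omega
    have hnssub : newset ⊆ π := by
      intro x hx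
      rcases Finset.mem_insert.mp hx with h | h
      · rwa [h]
      · exact (hSgood.1 i π hπ).1 (Finset.mem_erase.mp h).2
    -- searchesAt under S'
    have hupd_ne : ∀ j, j ≠ i → ∀ ω, (searchesAt Part S' j ω ↔ searchesAt Part S j ω) :=
      fun j hj ω => SG.searchesAt_update_ne Part S i _ hj ω
    have hupd_i : ∀ ω, searchesAt Part S' i ω ↔
        ((ω ∈ π ∧ ω ∈ newset) ∨ (ω ∉ π ∧ searchesAt Part S i ω)) :=
      fun ω => SG.searchesAt_update_cell Part (hPart i) S hπ newset ω
    -- multiplicity under S'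
    have hmc_other : ∀ ω, ω ≠ ω₀ → ω ≠ ω' → mcount Part S' ω = mcount Part S ω := by
      intro ω h0 h1
      apply congrArg Finset.card
      apply Finset.filter_congr
      intro j _
      rcases eq_or_ne j i with rfl | hj
      · rw [hupd_i ω]
        constructor
        · rintro (⟨hωπ, hmem⟩ | ⟨-, hs⟩)
          · refine ⟨π, hπ, hωπ, ?_⟩
            rcases Finset.mem_insert.mp hmem with h | h
            · exact absurd h h1
            · exact (Finset.mem_erase.mp h).2
          · exact hs
        · intro hs
          by_cases hωπ : ω ∈ π
          · left
            refine ⟨hωπ, ?_⟩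
            have hmem := (SG.searchesAt_iff Part S (hPart _) hπ hωπ).mp hs
            exact Finset.mem_insert.mpr (Or.inr (Finset.mem_erase.mpr ⟨h0, hmem⟩))
          · exact Or.inr ⟨hωπ, hs⟩
      · exact hupd_ne j hj ω
    have hmc_ω₀ : mcount Part S' ω₀ = 0 := by
      rw [mcount, Finset.card_eq_zero, Finset.filter_eq_empty_iff]
      intro j _
      rcases eq_or_ne j i with rfl | hj
      · rw [hupd_i ω₀]
        rintro (⟨-, hmem⟩ | ⟨h, -⟩)
        · rcases Finset.mem_insert.mp hmem with h | h
          · exact hne (h.symm)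
          · exact (Finset.mem_erase.mp h).1 rfl
        · exact h hω₀π
      · intro hs
        have hsi : searchesAt Part S i ω₀ := ⟨π, hπ, hω₀π, hω₀⟩
        have := SG.two_searchers Part S ((hupd_ne j hj ω₀).mp hs) hsi hj
        have := hSgood.2.2 ω₀
        omega
    have hmc_ω' : mcount Part S' ω' = 1 := by
      have : (Finset.univ.filter fun j => searchesAt Part S' j ω') = {i} := by
        ext j
        simp only [Finset.mem_filter, Finset.mem_univ, true_and, Finset.mem_singleton]
        constructor
        · intro hs
          by_contra hj
          exact hnosearch j ((hupd_ne j hj ω').mp hs)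
        · rintro rfl
          exact (hupd_i ω').mpr (Or.inl ⟨hω', Finset.mem_insert_self _ _⟩)
      rw [mcount, this, Finset.card_singleton]
    -- S' is a good profile
    have hS'good : SG.GoodProfile Part K S' := by
      refine ⟨?_, ?_, ?_⟩
      · intro j π' hπ'
        rcases eq_or_ne j i with rfl | hj
        · rw [hS'def, Function.update_self]
          by_cases hq : π' = π
          · subst hq
            rw [Function.update_self]
            exact ⟨hnssub, le_of_eq hnscard⟩
          · rw [Function.update_of_ne hq]
            exact hSgood.1 j π' hπ'
        · rw [hS'def, Function.update_of_ne hj]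
          exact hSgood.1 j π' hπ'
      · intro j π' hπ'
        rcases eq_or_ne j i with rfl | hj
        · rw [hS'def, Function.update_self]
          by_cases hq : π' = π
          · subst hq
            rw [Function.update_self]
            exact hnscard
          · rw [Function.update_of_ne hq]
            exact hSgood.2.1 j π' hπ'
        · rw [hS'def, Function.update_of_ne hj]
          exact hSgood.2.1 j π' hπ'
      · intro ω
        by_cases h0 : ω = ω₀
        · rw [h0, hmc_ω₀]; omega
        · by_cases h1 : ω = ω'
          · rw [h1, hmc_ω']
          · rw [hmc_other ω h0 h1]
            exact hSgood.2.2 ω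
    -- Phi increases weakly
    have hpair : ∀ h : Ω → ℝ, ∑ ω, h ω = ∑ ω ∈ Finset.univ \ {ω₀, ω'}, h ω + (h ω₀ + h ω') := by
      intro h
      rw [← Finset.sum_pair (show ω₀ ≠ ω' from fun e => hne e.symm)]
      exact (Finset.sum_sdiff (Finset.subset_univ _)).symm
    have hPhiform : ∀ s : N → Finset Ω → Finset Ω, SG.Phi Part μ vs s
        = ∑ ω, (if 1 ≤ mcount Part s ω then μ ω * vs ω else 0) := by
      intro s
      rw [SG.Phi, Finset.sum_filter]
    have hmS_ω₀ : mcount Part S ω₀ = 1 := hm1S i π hπ ω₀ hω₀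
    have hPhidiff : SG.Phi Part μ vs S' =
        SG.Phi Part μ vs S + μ ω' * vs ω' - μ ω₀ * vs ω₀ := by
      rw [hPhiform S', hPhiform S, hpair (fun ω => if 1 ≤ mcount Part S' ω then μ ω * vs ω else 0),
        hpair (fun ω => if 1 ≤ mcount Part S ω then μ ω * vs ω else 0)]
      have hcongr : ∑ ω ∈ Finset.univ \ {ω₀, ω'}, (if 1 ≤ mcount Part S' ω then μ ω * vs ω else 0)
          = ∑ ω ∈ Finset.univ \ {ω₀, ω'}, (if 1 ≤ mcount Part S ω then μ ω * vs ω else 0) := by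
        apply Finset.sum_congr rfl
        intro ω hω
        have hω2 := Finset.mem_sdiff.mp hω
        simp only [Finset.mem_insert, Finset.mem_singleton, not_or] at hω2
        rw [hmc_other ω hω2.2.1 hω2.2.2]
      rw [hcongr, hmc_ω₀, hmc_ω', hmS_ω₀, hm0]
      norm_num
      ring
    have hWdiff : SG.Wpot Part μ v S' =
        SG.Wpot Part μ v S + μ ω' * v i 1 ω' - μ ω₀ * v i 1 ω₀ := by
      rw [SG.Wpot, SG.Wpot, Finset.sum_eq_sum_sdiff_singleton_add (Finset.mem_univ i),
        Finset.sum_eq_sum_sdiff_singleton_add (Finset.mem_univ i)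
          (fun j => ∑ π' ∈ Part j, ∑ ω ∈ S j π', μ ω * v j 1 ω)]
      have h1 : ∑ j ∈ Finset.univ \ {i}, ∑ π' ∈ Part j, ∑ ω ∈ S' j π', μ ω * v j 1 ω
          = ∑ j ∈ Finset.univ \ {i}, ∑ π' ∈ Part j, ∑ ω ∈ S j π', μ ω * v j 1 ω := by
        apply Finset.sum_congr rfl
        intro j hj
        have hj2 : j ≠ i := by
          have := Finset.mem_sdiff.mp hj
          simpa using this.2
        rw [hS'def, Function.update_of_ne hj2]
      have h2 : ∑ π' ∈ Part i, ∑ ω ∈ S' i π', μ ω * v i 1 ω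
          = ∑ π' ∈ Part i, ∑ ω ∈ S i π', μ ω * v i 1 ω
            + μ ω' * v i 1 ω' - μ ω₀ * v i 1 ω₀ := by
        rw [Finset.sum_eq_sum_sdiff_singleton_add hπ, Finset.sum_eq_sum_sdiff_singleton_add hπ
          (fun π' => ∑ ω ∈ S i π', μ ω * v i 1 ω)]
        have h3 : ∑ π' ∈ Part i \ {π}, ∑ ω ∈ S' i π', μ ω * v i 1 ω
            = ∑ π' ∈ Part i \ {π}, ∑ ω ∈ S i π', μ ω * v i 1 ω := by
          apply Finset.sum_congr rfl
          intro π' hπ'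
          have hπ2 : π' ≠ π := by
            have := Finset.mem_sdiff.mp hπ'
            simpa using this.2
          rw [hS'def, Function.update_self, Function.update_of_ne hπ2]
        have h4 : ∑ ω ∈ S' i π, μ ω * v i 1 ω
            = ∑ ω ∈ S i π, μ ω * v i 1 ω + μ ω' * v i 1 ω' - μ ω₀ * v i 1 ω₀ := by
          rw [hS'def, Function.update_self, Function.update_self, hnsdef,
            Finset.sum_insert hω'er, Finset.sum_erase_eq_sub hω₀]
          ring
        rw [h3, h4]
        ring
      rw [h1, h2]
      ring
    have hOCle : μ ω₀ * vs ω₀ ≤ μ ω' * vs ω' := hOC i π hπ ω₀ hω₀π ω' hω' hlt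
    have hPhige : SG.Phi Part μ vs S ≤ SG.Phi Part μ vs S' := by
      rw [hPhidiff]; linarith
    have hWle := hWmax S' hS'good hPhige
    rw [hWdiff] at hWle
    linarith
  -- Nash property
  have hNash : IsNash Part K μ c v S := by
    refine ⟨hSgood.1, ?_⟩
    intro i t ht
    have hupdvalid : ValidFor Part K i (Function.update S i t i) := by
      rw [Function.update_self]; exact ht
    rw [SG.payoff_eq Part K μ c v i S (hPart i) (hSgood.1 i),
        SG.payoff_eq Part K μ c v i (Function.update S i t) (hPart i) hupdvalid]
    apply Finset.sum_le_sum
    intro π hπ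
    simp only [Function.update_self]
    have hT := hμ_cell i π hπ
    have hSiπcard : (S i π).card = K i := hSgood.2.1 i π hπ
    have hRHS : ∑ ω ∈ S i π, μ ω * v i (mcount Part S ω) ω
        = ∑ ω ∈ S i π, μ ω * v i 1 ω :=
      Finset.sum_congr rfl fun ω hω => by rw [hm1S i π hπ ω hω]
    rw [hRHS, hSiπcard]
    set O : Ω → ℕ :=
      fun ω => (Finset.univ.filter fun j => j ≠ i ∧ searchesAt Part S j ω).card with hOdef
    have hOupd : ∀ ω : Ω, mcount Part (Function.update S i t) ω
        = O ω + (if searchesAt Part (Function.update S i t) i ω then 1 else 0) := by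
      intro ω
      rw [SG.mcount_split Part (Function.update S i t) ω i]
      congr 1
      apply congrArg Finset.card
      apply Finset.filter_congr
      intro j _
      exact and_congr_right fun hj => SG.searchesAt_update_ne Part S i t hj ω
    have hmS : ∀ ω : Ω, mcount Part S ω
        = O ω + (if searchesAt Part S i ω then 1 else 0) :=
      fun ω => SG.mcount_split Part S ω i
    have hmemupd : ∀ ω ∈ π, (searchesAt Part (Function.update S i t) i ω ↔ ω ∈ t π) := by
      intro ω hω
      rw [SG.searchesAt_iff Part (Function.update S i t) (hPart i) hπ hω,
        Function.update_self]
    have hmemS : ∀ ω ∈ π, (searchesAt Part S i ω ↔ ω ∈ S i π) :=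
      fun ω hω => SG.searchesAt_iff Part S (hPart i) hπ hω
    have hupd_mc : ∀ ω ∈ t π, mcount Part (Function.update S i t) ω = O ω + 1 := by
      intro ω hω
      rw [hOupd ω, if_pos ((hmemupd ω ((ht π hπ).1 hω)).mpr hω)]
    apply SG.cell_ineq (t π) (S i π)
      (fun ω => μ ω * v i (mcount Part (Function.update S i t) ω) ω)
      (fun ω => μ ω * v i 1 ω)
      ((∑ x ∈ π, μ x) * c i (K i)) ((∑ x ∈ π, μ x) * c i ((t π).card))
      ((∑ x ∈ π, μ x) * (c i (K i) - c i (K i - 1))) (K i) hSiπcard ((ht π hπ).2)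
    · -- hfg
      intro ω hωt hωS
      have hO0 : O ω = 0 := by
        have h1 := hmS ω
        rw [if_pos ((hmemS ω ((ht π hπ).1 hωt)).mpr hωS), hm1S i π hπ ω hωS] at h1
        omega
      rw [hupd_mc ω hωt, hO0]
    · -- hle
      intro ω hωt hωS ω'' hω''
      have hωπ : ω ∈ π := (ht π hπ).1 hωt
      have hω''π : ω'' ∈ π := (hSgood.1 i π hπ).1 hω''
      have hOω : mcount Part S ω = O ω := by
        have h1 := hmS ω
        rw [if_neg (fun h => hωS ((hmemS ω hωπ).mp h))] at h1
        omega
      rcases Nat.eq_zero_or_pos (O ω) with h0 | h1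
      · rw [hupd_mc ω hωt, h0]
        exact hP3 i π hπ ω'' hω'' ω hωπ (by omega)
      · rw [hupd_mc ω hωt]
        calc μ ω * v i (O ω + 1) ω ≤ μ ω * v i 2 ω :=
            mul_le_mul_of_nonneg_left (hv_anti i ω 2 (O ω + 1) (by omega)) (hμ_nonneg ω)
          _ ≤ μ ω'' * v i 1 ω'' := hSSD1' i π hπ ω hωπ ω'' hω''π
    · -- hδ
      intro ω'' hω''
      exact hSSD2' i π hπ ω'' ((hSgood.1 i π hπ).1 hω'')
    · -- hδ0
      exact mul_nonneg hT.le (SG.cKsub_nonneg (c i) (hc_mono i) (K i))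
    · -- hcost
      have h := SG.c_chain (c i) (hc_convex i) (K i) ((t π).card) ((ht π hπ).2)
      have h2 := mul_le_mul_of_nonneg_left h hT.le
      have e1 : (∑ x ∈ π, μ x) * (((K i - (t π).card : ℕ) : ℝ) * (c i (K i) - c i (K i - 1)))
          = ((K i - (t π).card : ℕ) : ℝ) * ((∑ x ∈ π, μ x) * (c i (K i) - c i (K i - 1))) := by
        ring
      have e2 : (∑ x ∈ π, μ x) * (c i (K i) - c i ((t π).card))
          = (∑ x ∈ π, μ x) * c i (K i) - (∑ x ∈ π, μ x) * c i ((t π).card) := by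
        ring
      linarith
  -- optimality
  refine ⟨S, hNash, ?_⟩
  intro s' hs'
  obtain ⟨s3, hs3good, hs3cov, hs3card⟩ :=
    SG.exists_good_cover Part K hPart S hSgood s' hs'
  rw [SG.uci_eq, SG.uci_eq]
  set SS' : Finset Ω := Finset.univ.filter (fun ω => 1 ≤ mcount Part s' ω) with hSS'
  set SS3 : Finset Ω := Finset.univ.filter (fun ω => 1 ≤ mcount Part s3 ω) with hSS3
  have hsub : SS' ⊆ SS3 := by
    intro ω hω
    have h1 := (Finset.mem_filter.mp hω).2
    refine Finset.mem_filter.mpr ⟨Finset.mem_univ _, ?_⟩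
    exact (SG.mcount_pos_iff Part s3 ω).mpr (hs3cov ω ((SG.mcount_pos_iff Part s' ω).mp h1))
  have hfiltereq : ∀ s : N → Finset Ω → Finset Ω,
      Finset.univ.filter (fun ω => searched Part s ω)
        = Finset.univ.filter (fun ω => 1 ≤ mcount Part s ω) := by
    intro s
    apply Finset.filter_congr
    intro ω _
    exact (SG.mcount_pos_iff Part s ω).symm
  have hcard3 : SS3.card = Fintype.card (SG.Slot Part K) := by
    rw [hSS3, ← hfiltereq s3]
    exact hs3card
  have hcardSS' : SS'.card ≤ ∑ i, ∑ π ∈ Part i, (s' i π).card := by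
    rw [hSS', ← hfiltereq s']
    exact SG.card_searched_le Part s'
  have hPhi3 : SG.Phi Part μ vs s3 = SG.Phi Part μ vs s' + ∑ ω ∈ SS3 \ SS', μ ω * vs ω := by
    rw [SG.Phi, SG.Phi, ← hSS3, ← hSS', ← Finset.sum_sdiff hsub]
    ring
  have hCostS : SG.Cost Part μ c S = ∑ i, ∑ π ∈ Part i, (∑ x ∈ π, μ x) * c i (K i) := by
    rw [SG.Cost]
    exact Finset.sum_congr rfl fun i _ => Finset.sum_congr rfl fun π hπ => by
      rw [hSgood.2.1 i π hπ]
  have hCost3 : SG.Cost Part μ c s3 = ∑ i, ∑ π ∈ Part i, (∑ x ∈ π, μ x) * c i (K i) := by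
    rw [SG.Cost]
    exact Finset.sum_congr rfl fun i _ => Finset.sum_congr rfl fun π hπ => by
      rw [hs3good.2.1 i π hπ]
  have hslot : ∑ i, ∑ π ∈ Part i, K i = Fintype.card (SG.Slot Part K) := by
    rw [SG.card_slot]
    exact Finset.sum_congr rfl fun i _ => by rw [Finset.sum_const, smul_eq_mul]
  have hD : ∑ i, ∑ π ∈ Part i, (K i - (s' i π).card) ≤ (SS3 \ SS').card := by
    have h1 : (SS3 \ SS').card = SS3.card - SS'.card := Finset.card_sdiff_of_subset hsub
    have hle' : SS'.card ≤ SS3.card := Finset.card_le_card hsub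
    have h3 : (∑ i, ∑ π ∈ Part i, ((K i - (s' i π).card) + (s' i π).card))
        = (∑ i, ∑ π ∈ Part i, (K i - (s' i π).card)) + (∑ i, ∑ π ∈ Part i, (s' i π).card) := by
      rw [← Finset.sum_add_distrib]
      exact Finset.sum_congr rfl fun i _ => Finset.sum_add_distrib
    have h4 : (∑ i, ∑ π ∈ Part i, ((K i - (s' i π).card) + (s' i π).card))
        = ∑ i, ∑ π ∈ Part i, K i :=
      Finset.sum_congr rfl fun i _ => Finset.sum_congr rfl fun π hπ => by
        have := (hs' i π hπ).2; omega
    omega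
  have e : SG.Cost Part μ c S - SG.Cost Part μ c s'
      = ∑ i, ∑ π ∈ Part i,
          ((∑ x ∈ π, μ x) * c i (K i) - (∑ x ∈ π, μ x) * c i ((s' i π).card)) := by
    rw [hCostS, SG.Cost, ← Finset.sum_sub_distrib]
    exact Finset.sum_congr rfl fun i _ => (Finset.sum_sub_distrib _ _).symm
  have hkey : SG.Cost Part μ c S - SG.Cost Part μ c s'
      ≤ ∑ ω ∈ SS3 \ SS', μ ω * vs ω := by
    rcases Finset.eq_empty_or_nonempty (SS3 \ SS') with hD0 | hDn
    · rw [hD0, Finset.sum_empty, e]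
      have hz : ∑ i, ∑ π ∈ Part i, (K i - (s' i π).card) = 0 := by
        rw [hD0] at hD
        simpa using hD
      have hfullk : ∀ i, ∀ π ∈ Part i, (s' i π).card = K i := by
        intro i π hπ
        have hi : ∑ π ∈ Part i, (K i - (s' i π).card) = 0 :=
          (Finset.sum_eq_zero_iff.mp hz) i (Finset.mem_univ i)
        have h2 : K i - (s' i π).card = 0 := (Finset.sum_eq_zero_iff.mp hi) π hπ
        have := (hs' i π hπ).2
        omega
      apply le_of_eq
      apply Finset.sum_eq_zero
      intro i _
      apply Finset.sum_eq_zero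
      intro π hπ
      rw [hfullk i π hπ]
      ring
    · obtain ⟨ωm, hωm, hmin⟩ := Finset.exists_min_image (SS3 \ SS') (fun ω => μ ω * vs ω) hDn
      have hρ0 : 0 ≤ μ ωm * vs ωm := mul_nonneg (hμ_nonneg _) (hvs_nonneg _)
      rw [e]
      have hterm : ∀ i ∈ Finset.univ (α := N), ∀ π ∈ Part i,
          (∑ x ∈ π, μ x) * c i (K i) - (∑ x ∈ π, μ x) * c i ((s' i π).card)
            ≤ ((K i - (s' i π).card : ℕ) : ℝ) * (μ ωm * vs ωm) := by
        intro i _ π hπ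
        have hchain := SG.c_chain (c i) (hc_convex i) (K i) ((s' i π).card) (hs' i π hπ).2
        have hT := hμ_cell i π hπ
        have h2 := mul_le_mul_of_nonneg_left hchain hT.le
        have h3 : (∑ x ∈ π, μ x) * (c i (K i) - c i (K i - 1)) ≤ μ ωm * vs ωm :=
          hVC ωm i π hπ
        have h4 : (0:ℝ) ≤ ((K i - (s' i π).card : ℕ) : ℝ) := Nat.cast_nonneg _
        have e1 : (∑ x ∈ π, μ x) * (((K i - (s' i π).card : ℕ) : ℝ) * (c i (K i) - c i (K i - 1)))
            = ((K i - (s' i π).card : ℕ) : ℝ) * ((∑ x ∈ π, μ x) * (c i (K i) - c i (K i - 1))) := by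
          ring
        have e2 : (∑ x ∈ π, μ x) * (c i (K i) - c i ((s' i π).card))
            = (∑ x ∈ π, μ x) * c i (K i) - (∑ x ∈ π, μ x) * c i ((s' i π).card) := by
          ring
        have h5 : ((K i - (s' i π).card : ℕ) : ℝ) * ((∑ x ∈ π, μ x) * (c i (K i) - c i (K i - 1)))
            ≤ ((K i - (s' i π).card : ℕ) : ℝ) * (μ ωm * vs ωm) :=
          mul_le_mul_of_nonneg_left h3 h4
        linarith
      calc ∑ i, ∑ π ∈ Part i,
            ((∑ x ∈ π, μ x) * c i (K i) - (∑ x ∈ π, μ x) * c i ((s' i π).card))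
          ≤ ∑ i, ∑ π ∈ Part i, ((K i - (s' i π).card : ℕ) : ℝ) * (μ ωm * vs ωm) :=
            Finset.sum_le_sum fun i hi => Finset.sum_le_sum (hterm i hi)
        _ = ((∑ i, ∑ π ∈ Part i, (K i - (s' i π).card) : ℕ) : ℝ) * (μ ωm * vs ωm) := by
            push_cast
            rw [Finset.sum_mul]
            exact Finset.sum_congr rfl fun i _ => by rw [Finset.sum_mul]
        _ ≤ (((SS3 \ SS').card : ℕ) : ℝ) * (μ ωm * vs ωm) :=
            mul_le_mul_of_nonneg_right (by exact_mod_cast hD) hρ0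
        _ ≤ ∑ ω ∈ SS3 \ SS', μ ω * vs ω := by
            have := Finset.card_nsmul_le_sum (SS3 \ SS') (fun ω => μ ω * vs ω)
              (μ ωm * vs ωm) hmin
            simpa [nsmul_eq_mul] using this
  have hPhiS3 : SG.Phi Part μ vs s3 ≤ SG.Phi Part μ vs S := hPhimax s3 hs3good
  have hCost3S : SG.Cost Part μ c s3 = SG.Cost Part μ c S := hCost3.trans hCostS.symm
  linarith [hPhi3, hkey, hPhiS3]
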